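/- Fix indices k ≠ l and j ∉ {k, l}. Let A_j : U → M_2(ℂ) and let g, h : U → ℂ² be holomorphic maps satisfying ∂g/∂λ_j = A_j g/(λ_j − λ_k) and ∂h/∂λ_j = A_j h/(λ_j − λ_l), and suppose the 2×2 matrix G with columns (g, h) is invertible. Then tr[A_j G P₊ G⁻¹]/(λ_j − λ_k) + tr[A_j G P₋ G⁻¹]/(λ_j − λ_l) = tr[(∂G/∂λ_j) G⁻¹] = (∂ det G/∂λ_j)/det G. (This identity gives the shift Ĥ_j − H_j = ∂(ln det G)/∂λ_j of the Hamiltonians under an elementary Schlesinger transformation for j ≠ k, l.) -/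

import Mathlib

open Matrix
set_option maxHeartbeats 1600000

attribute [local instance] Matrix.normedAddCommGroup Matrix.normedSpace

/-- The projection matrix `P₊ = [[1,0],[0,0]]`. -/
def Pplus : Matrix (Fin 2) (Fin 2) ℂ := !![1, 0; 0, 0]

/-- The projection matrix `P₋ = [[0,0],[0,1]]`. -/
def Pminus : Matrix (Fin 2) (Fin 2) ℂ := !![0, 0; 0, 1]

/-- For `k ≠ l`, `j ∉ {k,l}`, holomorphic `g, h` with
`∂g/∂λ_j = A_j g/(λ_j − λ_k)`, `∂h/∂λ_j = A_j h/(λ_j − λ_l)`, and `G = (g, h)` invertible: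
`tr[A_j G P₊ G⁻¹]/(λ_j − λ_k) + tr[A_j G P₋ G⁻¹]/(λ_j − λ_l) = tr[(∂G/∂λ_j) G⁻¹]
 = (∂ det G/∂λ_j)/det G`,
which gives the shift `Ĥ_j − H_j = ∂(ln det G)/∂λ_j` of the Hamiltonians under an
elementary Schlesinger transformation for `j ≠ k, l`. -/
theorem hamiltonian_shift_identity (N : ℕ) (hN : 2 ≤ N)
    (U : Set (Fin N → ℂ)) (hU : IsOpen U)
    (hdist : ∀ x ∈ U, ∀ i j : Fin N, i ≠ j → x i ≠ x j)
    (k l j : Fin N) (hkl : k ≠ l) (hjk : j ≠ k) (hjl : j ≠ l)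
    (Aj : (Fin N → ℂ) → Matrix (Fin 2) (Fin 2) ℂ)
    (g h : (Fin N → ℂ) → Fin 2 → ℂ)
    (hg : DifferentiableOn ℂ g U) (hh : DifferentiableOn ℂ h U)
    (hgeq : ∀ x ∈ U, fderiv ℂ g x (Pi.single j 1) =
      (x j - x k)⁻¹ • (Aj x).mulVec (g x))
    (hheq : ∀ x ∈ U, fderiv ℂ h x (Pi.single j 1) =
      (x j - x l)⁻¹ • (Aj x).mulVec (h x))
    (G : (Fin N → ℂ) → Matrix (Fin 2) (Fin 2) ℂ)
    (hGdef : ∀ y : Fin N → ℂ, ∀ i : Fin 2, G y i 0 = g y i ∧ G y i 1 = h y i)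
    (hGinv : ∀ x ∈ U, IsUnit (G x).det) :
    ∀ x ∈ U,
      Matrix.trace (Aj x * (G x * Pplus * (G x)⁻¹)) / (x j - x k) +
          Matrix.trace (Aj x * (G x * Pminus * (G x)⁻¹)) / (x j - x l) =
        Matrix.trace (fderiv ℂ G x (Pi.single j 1) * (G x)⁻¹) ∧
      Matrix.trace (fderiv ℂ G x (Pi.single j 1) * (G x)⁻¹) =
        fderiv ℂ (fun y => (G y).det) x (Pi.single j 1) / (G x).det := by
  intro x hxU
  have hnx : U ∈ nhds x := hU.mem_nhds hxU
  have hg' : HasFDerivAt g (fderiv ℂ g x) x := ((hg x hxU).differentiableAt hnx).hasFDerivAt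
  have hh' : HasFDerivAt h (fderiv ℂ h x) x := ((hh x hxU).differentiableAt hnx).hasFDerivAt
  set Dg := fderiv ℂ g x with hDg
  set Dh := fderiv ℂ h x with hDh
  let Φ : ((Fin 2 → ℂ) × (Fin 2 → ℂ)) →ₗ[ℂ] Matrix (Fin 2) (Fin 2) ℂ :=
    { toFun := fun p => Matrix.of fun i c => if c = 0 then p.1 i else p.2 i
      map_add' := by
        intro p q; ext i c; by_cases hc : c = 0 <;> simp [hc, Matrix.add_apply]
      map_smul' := by
        intro r p; ext i c; by_cases hc : c = 0 <;> simp [hc, Matrix.smul_apply] }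
  let Φc : ((Fin 2 → ℂ) × (Fin 2 → ℂ)) →L[ℂ] Matrix (Fin 2) (Fin 2) ℂ :=
    Φ.toContinuousLinearMap
  have hGfun : G = fun y => Φc (g y, h y) := by
    funext y; ext i c
    fin_cases c
    · simpa [Φc, Φ] using (hGdef y i).1
    · simpa [Φc, Φ] using (hGdef y i).2
  have hG' : HasFDerivAt G (Φc.comp (Dg.prod Dh)) x := by
    rw [hGfun]; exact Φc.hasFDerivAt.comp x (hg'.prodMk hh')
  have hfd : fderiv ℂ G x = Φc.comp (Dg.prod Dh) := hG'.fderiv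
  have hk : x j - x k ≠ 0 := sub_ne_zero.mpr (hdist x hxU j k hjk)
  have hl : x j - x l ≠ 0 := sub_ne_zero.mpr (hdist x hxU j l hjl)
  have hdetne : (G x).det ≠ 0 := (hGinv x hxU).ne_zero
  have hDge : Dg (Pi.single j 1) = (x j - x k)⁻¹ • (Aj x).mulVec (g x) := by
    rw [hDg]; exact hgeq x hxU
  have hDhe : Dh (Pi.single j 1) = (x j - x l)⁻¹ • (Aj x).mulVec (h x) := by
    rw [hDh]; exact hheq x hxU
  have hGx : G x = !![g x 0, h x 0; g x 1, h x 1] := by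
    ext i c
    fin_cases i <;> fin_cases c <;>
      simp [(hGdef x 0).1, (hGdef x 0).2, (hGdef x 1).1, (hGdef x 1).2]
  have hGe : fderiv ℂ G x (Pi.single j 1) =
      !![(x j - x k)⁻¹ * ((Aj x).mulVec (g x) 0), (x j - x l)⁻¹ * ((Aj x).mulVec (h x) 0);
         (x j - x k)⁻¹ * ((Aj x).mulVec (g x) 1), (x j - x l)⁻¹ * ((Aj x).mulVec (h x) 1)] := by
    rw [hfd]
    ext i c
    fin_cases i <;> fin_cases c <;>
      simp [Φc, Φ, hDge, hDhe, Pi.smul_apply, smul_eq_mul]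
  have hinv : (G x)⁻¹ = ((G x).det)⁻¹ • !![h x 1, -(h x 0); -(g x 1), g x 0] := by
    rw [Matrix.inv_def, Ring.inverse_eq_inv']
    congr 1
    rw [hGx, Matrix.adjugate_fin_two]
    ext i c
    fin_cases i <;> fin_cases c <;> simp
  -- derivative of det
  have hg0 : HasFDerivAt (fun y => g y 0)
      ((ContinuousLinearMap.proj (R := ℂ) (φ := fun _ : Fin 2 => ℂ) 0).comp Dg) x :=
    (ContinuousLinearMap.proj (R := ℂ) (φ := fun _ : Fin 2 => ℂ) 0).hasFDerivAt.comp x hg'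
  have hg1 : HasFDerivAt (fun y => g y 1)
      ((ContinuousLinearMap.proj (R := ℂ) (φ := fun _ : Fin 2 => ℂ) 1).comp Dg) x :=
    (ContinuousLinearMap.proj (R := ℂ) (φ := fun _ : Fin 2 => ℂ) 1).hasFDerivAt.comp x hg'
  have hh0 : HasFDerivAt (fun y => h y 0)
      ((ContinuousLinearMap.proj (R := ℂ) (φ := fun _ : Fin 2 => ℂ) 0).comp Dh) x :=
    (ContinuousLinearMap.proj (R := ℂ) (φ := fun _ : Fin 2 => ℂ) 0).hasFDerivAt.comp x hh'
  have hh1 : HasFDerivAt (fun y => h y 1)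
      ((ContinuousLinearMap.proj (R := ℂ) (φ := fun _ : Fin 2 => ℂ) 1).comp Dh) x :=
    (ContinuousLinearMap.proj (R := ℂ) (φ := fun _ : Fin 2 => ℂ) 1).hasFDerivAt.comp x hh'
  have hdetf : (fun y => (G y).det) = fun y => g y 0 * h y 1 - h y 0 * g y 1 := by
    funext y
    rw [Matrix.det_fin_two, (hGdef y 0).1, (hGdef y 1).2, (hGdef y 0).2, (hGdef y 1).1]
  have hdet' : HasFDerivAt (fun y => (G y).det)
      ((g x 0 • ((ContinuousLinearMap.proj (R := ℂ) (φ := fun _ : Fin 2 => ℂ) 1).comp Dh) +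
        h x 1 • ((ContinuousLinearMap.proj (R := ℂ) (φ := fun _ : Fin 2 => ℂ) 0).comp Dg)) -
       (h x 0 • ((ContinuousLinearMap.proj (R := ℂ) (φ := fun _ : Fin 2 => ℂ) 1).comp Dg) +
        g x 1 • ((ContinuousLinearMap.proj (R := ℂ) (φ := fun _ : Fin 2 => ℂ) 0).comp Dh))) x := by
    rw [hdetf]; exact (hg0.mul hh1).sub (hh0.mul hg1)
  have hfdet : fderiv ℂ (fun y => (G y).det) x (Pi.single j 1) =
      g x 0 * Dh (Pi.single j 1) 1 + h x 1 * Dg (Pi.single j 1) 0 -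
      (h x 0 * Dg (Pi.single j 1) 1 + g x 1 * Dh (Pi.single j 1) 0) := by
    rw [hdet'.fderiv]
    simp [smul_eq_mul]
  have hm1 : (Aj x *ᵥ g x) 0 = Aj x 0 0 * g x 0 + Aj x 0 1 * g x 1 := by
    simp [Matrix.mulVec, dotProduct, Fin.sum_univ_two]
  have hm2 : (Aj x *ᵥ g x) 1 = Aj x 1 0 * g x 0 + Aj x 1 1 * g x 1 := by
    simp [Matrix.mulVec, dotProduct, Fin.sum_univ_two]
  have hm3 : (Aj x *ᵥ h x) 0 = Aj x 0 0 * h x 0 + Aj x 0 1 * h x 1 := by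
    simp [Matrix.mulVec, dotProduct, Fin.sum_univ_two]
  have hm4 : (Aj x *ᵥ h x) 1 = Aj x 1 0 * h x 0 + Aj x 1 1 * h x 1 := by
    simp [Matrix.mulVec, dotProduct, Fin.sum_univ_two]
  have hdet2 : (G x).det = g x 0 * h x 1 - h x 0 * g x 1 := by
    rw [hGx, Matrix.det_fin_two_of]
  have hAx : Aj x = !![Aj x 0 0, Aj x 0 1; Aj x 1 0, Aj x 1 1] := by
    ext i c; fin_cases i <;> fin_cases c <;> simp
  constructor
  · rw [hGe, hinv, hdet2, hm1, hm2, hm3, hm4]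
    rw [hGx]
    rw [hAx]
    simp only [Pplus, Pminus, Matrix.trace_fin_two, Matrix.mul_apply, Fin.sum_univ_two,
      Matrix.smul_apply, smul_eq_mul,
      Matrix.of_apply, Matrix.cons_val', Matrix.cons_val_zero, Matrix.cons_val_one, Matrix.head_cons,
      Matrix.head_fin_const, Matrix.empty_val', Matrix.cons_val_fin_one, div_eq_mul_inv]
    ring
  · rw [hGe, hinv, hfdet, hDge, hDhe]
    simp only [Matrix.trace_fin_two, Matrix.mul_apply, Fin.sum_univ_two,
      Matrix.smul_apply, smul_eq_mul, Pi.smul_apply, hm1, hm2, hm3, hm4, hdet2,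
      div_eq_mul_inv,
      Matrix.of_apply, Matrix.cons_val', Matrix.cons_val_zero, Matrix.cons_val_one, Matrix.head_cons,
      Matrix.head_fin_const, Matrix.empty_val', Matrix.cons_val_fin_one]
    ring
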